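/- (Path coupling.) Let (P, Ω, π) be a finite-state, irreducible, aperiodic Markov chain with stationary distribution π, Φ a metric on Ω with D = D_max/D_min as above, and S ⊆ Ω×Ω a set of pairs such that for all x,y ∈ Ω there exists a path x = z_0, z_1, …, z_r = y with (z_l, z_{l+1}) ∈ S for 0 ≤ l < r and Φ(x,y) = Σ_{l=0}^{r−1} Φ(z_l, z_{l+1}). Suppose (X(t),Y(t)) is a coupling of the chain with Y(t) stationary, and there exists β < 1 such that the contraction condition E[Φ(X(t+1),Y(t+1)) | X(t)=x, Y(t)=y] ≤ β Φ(x,y) holds for every pair (x,y) ∈ S. Then ||μ_t − π||_var ≤ min{1, β^t D} for the distribution μ_t of X(t), and T_mix ≤ ⌈log(De)/log(β^{-1})⌉ ≤ ⌈log(De)/(1−β)⌉. -/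

import Mathlib

open Finset

/-- Distribution at time `t` of a Markov chain with transition matrix `P`
started at state `x`. -/
noncomputable def chainDist {S : Type*} [Fintype S] [DecidableEq S]
    (P : S → S → ℝ) (x : S) : ℕ → S → ℝ
  | 0 => fun s => if s = x then 1 else 0
  | t + 1 => fun s => ∑ s' : S, chainDist P x t s' * P s' s

/-- `t`-step transition probabilities. -/
noncomputable def chainPow {S : Type*} [Fintype S] [DecidableEq S]
    (P : S → S → ℝ) : ℕ → S → S → ℝ
  | 0 => fun x y => if x = y then 1 else 0
  | t + 1 => fun x y => ∑ z : S, chainPow P t x z * P z y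

/-- Total variation distance between two distributions on a finite set. -/
noncomputable def tvDist {S : Type*} [Fintype S] (μ ν : S → ℝ) : ℝ :=
  (1 / 2) * ∑ s : S, |μ s - ν s|

/-- Mixing time: the maximum over starting states in `states` of the first time
the distribution is within `1/e` of `π` in total variation. -/
noncomputable def mixTime {S : Type*} [Fintype S] [DecidableEq S]
    (P : S → S → ℝ) (π : S → ℝ) (states : Finset S) : ℕ :=
  states.sup fun x => sInf {t : ℕ | tvDist (chainDist P x t) π ≤ 1 / Real.exp 1}

/-- A finite Markov chain is irreducible if every state can reach every other
state in a positive number of steps. -/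
def ChainIrreducible {S : Type*} [Fintype S] [DecidableEq S] (P : S → S → ℝ) : Prop :=
  ∀ x y : S, ∃ t : ℕ, 0 < t ∧ 0 < chainPow P t x y

/-- A finite Markov chain is aperiodic if, for every state, every common divisor
of its set of positive return times equals `1` (i.e. the gcd of the return times
is `1`). -/
def ChainAperiodic {S : Type*} [Fintype S] [DecidableEq S] (P : S → S → ℝ) : Prop :=
  ∀ x : S, ∀ d : ℕ, (∀ t : ℕ, 0 < t → 0 < chainPow P t x x → d ∣ t) → d = 1

/-! ### Auxiliary lemmas for the path-coupling argument -/

set_option linter.unusedSectionVars false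

section PathCouplingAux
variable {Ω : Type*} [Fintype Ω] [DecidableEq Ω]

/-- Glue two couplings along a common middle marginal. -/
noncomputable def glueC (Pz : Ω → ℝ) (A B : Ω × Ω → ℝ) : Ω × Ω → ℝ :=
  fun p => ∑ c, if Pz c = 0 then 0 else A (p.1, c) * B (c, p.2) / Pz c

lemma zero_of_sum_zero {f : Ω → ℝ} (h0 : ∀ a, 0 ≤ f a) (h : ∑ a, f a = 0) (a : Ω) :
    f a = 0 :=
  (Finset.sum_eq_zero_iff_of_nonneg (fun i _ => h0 i)).mp h a (mem_univ a)

lemma glueC_nonneg {Pz : Ω → ℝ} {A B : Ω × Ω → ℝ}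
    (hPz : ∀ c, 0 ≤ Pz c) (hA : ∀ p, 0 ≤ A p) (hB : ∀ p, 0 ≤ B p) (p : Ω × Ω) :
    0 ≤ glueC Pz A B p := by
  refine Finset.sum_nonneg fun c _ => ?_
  split
  · exact le_refl 0
  · exact div_nonneg (mul_nonneg (hA _) (hB _)) (hPz c)

lemma glueC_marg1 {Pz : Ω → ℝ} {A B : Ω × Ω → ℝ}
    (hA0 : ∀ p, 0 ≤ A p) (hA2 : ∀ c, ∑ a, A (a, c) = Pz c)
    (hB1 : ∀ c, ∑ b, B (c, b) = Pz c) (a : Ω) :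
    ∑ b, glueC Pz A B (a, b) = ∑ c, A (a, c) := by
  unfold glueC
  rw [Finset.sum_comm]
  refine Finset.sum_congr rfl fun c _ => ?_
  by_cases h : Pz c = 0
  · simp only [h, if_true, Finset.sum_const, smul_zero]
    have : A (a, c) = 0 := zero_of_sum_zero (fun i => hA0 (i, c)) (by rw [hA2, h]) a
    simp [this]
  · simp only [h, if_false]
    rw [← Finset.sum_div, ← Finset.mul_sum, hB1, mul_div_assoc, div_self h, mul_one]

lemma glueC_marg2 {Pz : Ω → ℝ} {A B : Ω × Ω → ℝ}
    (hB0 : ∀ p, 0 ≤ B p) (hA2 : ∀ c, ∑ a, A (a, c) = Pz c)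
    (hB1 : ∀ c, ∑ b, B (c, b) = Pz c) (b : Ω) :
    ∑ a, glueC Pz A B (a, b) = ∑ c, B (c, b) := by
  unfold glueC
  rw [Finset.sum_comm]
  refine Finset.sum_congr rfl fun c _ => ?_
  by_cases h : Pz c = 0
  · simp only [h, if_true, Finset.sum_const, smul_zero]
    have : B (c, b) = 0 := zero_of_sum_zero (fun i => hB0 (c, i)) (by rw [hB1, h]) b
    simp [this]
  · simp only [h, if_false]
    have e2 : ∑ a, A (a, c) * B (c, b) / Pz c = (∑ a, A (a, c)) * B (c, b) / Pz c := by
      rw [Finset.sum_mul, Finset.sum_div]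
    rw [e2, hA2, mul_comm, mul_div_assoc, div_self h, mul_one]

lemma glueC_expect {Pz : Ω → ℝ} {A B : Ω × Ω → ℝ}
    (hA0 : ∀ p, 0 ≤ A p) (hB0 : ∀ p, 0 ≤ B p)
    (hA2 : ∀ c, ∑ a, A (a, c) = Pz c) (hB1 : ∀ c, ∑ b, B (c, b) = Pz c)
    (Φ : Ω → Ω → ℝ) (htri : ∀ a c b, Φ a b ≤ Φ a c + Φ c b) :
    ∑ p : Ω × Ω, glueC Pz A B p * Φ p.1 p.2 ≤
      (∑ p : Ω × Ω, A p * Φ p.1 p.2) + ∑ p : Ω × Ω, B p * Φ p.1 p.2 := by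
  have hPz : ∀ c, 0 ≤ Pz c := fun c => by
    rw [← hA2 c]; exact Finset.sum_nonneg fun a _ => hA0 (a, c)
  set Sc : Ω → ℝ := fun c => ∑ b, B (c, b) * Φ c b with hSc
  have key : ∀ a b : Ω, glueC Pz A B (a, b) * Φ a b ≤
      ∑ c, (if Pz c = 0 then 0 else A (a, c) * B (c, b) / Pz c) * (Φ a c + Φ c b) := by
    intro a b
    unfold glueC
    rw [Finset.sum_mul]
    refine Finset.sum_le_sum fun c _ => ?_
    by_cases h : Pz c = 0
    · simp [h]
    · simp only [h, if_false]
      have hw : 0 ≤ A (a, c) * B (c, b) / Pz c :=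
        div_nonneg (mul_nonneg (hA0 _) (hB0 _)) (hPz c)
      exact mul_le_mul_of_nonneg_left (htri a c b) hw
  have h2 : ∀ a c : Ω, ∑ b, (if Pz c = 0 then 0 else A (a, c) * B (c, b) / Pz c) * (Φ a c + Φ c b)
      = A (a, c) * Φ a c + (if Pz c = 0 then 0 else A (a, c) / Pz c * Sc c) := by
    intro a c
    by_cases h : Pz c = 0
    · have hA : A (a, c) = 0 := zero_of_sum_zero (fun i => hA0 (i, c)) (by rw [hA2, h]) a
      simp [h, hA]
    · simp only [h, if_false]
      have : ∀ b, A (a, c) * B (c, b) / Pz c * (Φ a c + Φ c b)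
          = A (a, c) / Pz c * (B (c, b) * (Φ a c + Φ c b)) := by intro b; ring
      rw [Finset.sum_congr rfl fun b _ => this b, ← Finset.mul_sum]
      have e : ∑ b, B (c, b) * (Φ a c + Φ c b) = Pz c * Φ a c + Sc c := by
        rw [hSc]
        simp only [mul_add]
        rw [Finset.sum_add_distrib, ← Finset.sum_mul, hB1]
      rw [e]
      field_simp
  have h3 : ∑ a, ∑ c, (if Pz c = 0 then 0 else A (a, c) / Pz c * Sc c) = ∑ c, Sc c := by
    rw [Finset.sum_comm]
    refine Finset.sum_congr rfl fun c _ => ?_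
    by_cases h : Pz c = 0
    · have hB : ∀ b, B (c, b) = 0 := fun b =>
        zero_of_sum_zero (fun i => hB0 (c, i)) (by rw [hB1, h]) b
      simp [h, hSc, hB]
    · simp only [h, if_false]
      have : ∀ a, A (a, c) / Pz c * Sc c = A (a, c) * (Sc c / Pz c) := by intro a; ring
      rw [Finset.sum_congr rfl fun a _ => this a, ← Finset.sum_mul, hA2]
      field_simp
  calc ∑ p : Ω × Ω, glueC Pz A B p * Φ p.1 p.2
      = ∑ a, ∑ b, glueC Pz A B (a, b) * Φ a b := by rw [Fintype.sum_prod_type]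
    _ ≤ ∑ a, ∑ b, ∑ c, (if Pz c = 0 then 0 else A (a, c) * B (c, b) / Pz c) * (Φ a c + Φ c b) :=
        Finset.sum_le_sum fun a _ => Finset.sum_le_sum fun b _ => key a b
    _ = ∑ a, ∑ c, ∑ b, (if Pz c = 0 then 0 else A (a, c) * B (c, b) / Pz c) * (Φ a c + Φ c b) := by
        exact Finset.sum_congr rfl fun a _ => Finset.sum_comm
    _ = ∑ a, ∑ c, (A (a, c) * Φ a c + (if Pz c = 0 then 0 else A (a, c) / Pz c * Sc c)) :=
        Finset.sum_congr rfl fun a _ => Finset.sum_congr rfl fun c _ => h2 a c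
    _ = (∑ a, ∑ c, A (a, c) * Φ a c)
        + ∑ a, ∑ c, (if Pz c = 0 then 0 else A (a, c) / Pz c * Sc c) := by
        rw [← Finset.sum_add_distrib]
        exact Finset.sum_congr rfl fun a _ => Finset.sum_add_distrib
    _ = (∑ a, ∑ c, A (a, c) * Φ a c) + ∑ c, Sc c := by rw [h3]
    _ = (∑ p : Ω × Ω, A p * Φ p.1 p.2) + ∑ p : Ω × Ω, B p * Φ p.1 p.2 := by
        simp [Fintype.sum_prod_type, hSc]

/-- Coupling of `P (z 0)` and `P (z r)` obtained by gluing the edge couplings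
along the path `z`. -/
noncomputable def pathC (P : Ω → Ω → ℝ) (K : Ω → Ω → Ω × Ω → ℝ) (z : ℕ → Ω) :
    ℕ → Ω × Ω → ℝ
  | 0 => fun p => if p.1 = p.2 then P (z 0) p.1 else 0
  | r + 1 => glueC (P (z r)) (pathC P K z r) (K (z r) (z (r + 1)))

variable {P : Ω → Ω → ℝ} {K : Ω → Ω → Ω × Ω → ℝ} {z : ℕ → Ω}

lemma pathC_nonneg (hP0 : ∀ x y, 0 ≤ P x y) (hK0 : ∀ x y p, 0 ≤ K x y p) :
    ∀ r p, 0 ≤ pathC P K z r p := by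
  intro r
  induction r with
  | zero => intro p; simp only [pathC]; split <;> simp [hP0]
  | succ r ih =>
      intro p
      exact glueC_nonneg (fun c => hP0 _ c) ih (fun q => hK0 _ _ q) p

lemma pathC_marg (hP0 : ∀ x y, 0 ≤ P x y) (hK0 : ∀ x y p, 0 ≤ K x y p)
    (hKm1 : ∀ x y x', ∑ y', K x y (x', y') = P x x')
    (hKm2 : ∀ x y y', ∑ x', K x y (x', y') = P y y') :
    ∀ r, (∀ a, ∑ b, pathC P K z r (a, b) = P (z 0) a) ∧
      (∀ b, ∑ a, pathC P K z r (a, b) = P (z r) b) := by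
  intro r
  induction r with
  | zero =>
      constructor
      · intro a; simp [pathC]
      · intro b; simp [pathC]
  | succ r ih =>
      constructor
      · intro a
        rw [show pathC P K z (r + 1) = glueC (P (z r)) (pathC P K z r) (K (z r) (z (r+1))) from rfl]
        rw [glueC_marg1 (pathC_nonneg hP0 hK0 r) ih.2 (fun c => hKm1 (z r) (z (r+1)) c) a]
        exact ih.1 a
      · intro b
        rw [show pathC P K z (r + 1) = glueC (P (z r)) (pathC P K z r) (K (z r) (z (r+1))) from rfl]
        rw [glueC_marg2 (fun q => hK0 _ _ q) ih.2 (fun c => hKm1 (z r) (z (r+1)) c) b]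
        exact hKm2 (z r) (z (r+1)) b

lemma pathC_expect (hP0 : ∀ x y, 0 ≤ P x y) (hK0 : ∀ x y p, 0 ≤ K x y p)
    (hKm1 : ∀ x y x', ∑ y', K x y (x', y') = P x x')
    (hKm2 : ∀ x y y', ∑ x', K x y (x', y') = P y y')
    (Φ : Ω → Ω → ℝ) (hΦdiag : ∀ a, Φ a a = 0)
    (htri : ∀ a c b, Φ a b ≤ Φ a c + Φ c b) (β : ℝ)
    (r : ℕ)
    (hS : ∀ l < r, ∑ p' : Ω × Ω, K (z l) (z (l + 1)) p' * Φ p'.1 p'.2 ≤ β * Φ (z l) (z (l + 1))) :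
    ∑ p : Ω × Ω, pathC P K z r p * Φ p.1 p.2 ≤ β * ∑ l ∈ Finset.range r, Φ (z l) (z (l + 1)) := by
  induction r with
  | zero =>
      have h0 : ∑ p : Ω × Ω, pathC P K z 0 p * Φ p.1 p.2 = 0 := by
        refine Finset.sum_eq_zero fun p _ => ?_
        simp only [pathC]
        by_cases h : p.1 = p.2
        · have hz : Φ p.1 p.2 = 0 := by rw [h]; exact hΦdiag p.2
          rw [if_pos h, hz, mul_zero]
        · rw [if_neg h, zero_mul]
      simp [h0]
  | succ r ih =>
      have step := glueC_expect (pathC_nonneg hP0 hK0 r) (fun q => hK0 (z r) (z (r+1)) q)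
        ((pathC_marg hP0 hK0 hKm1 hKm2 r).2)
        (fun c => hKm1 (z r) (z (r+1)) c) Φ htri
      have h1 := ih (fun l hl => hS l (Nat.lt_succ_of_lt hl))
      have h2 := hS r (Nat.lt_succ_self r)
      calc ∑ p : Ω × Ω, pathC P K z (r + 1) p * Φ p.1 p.2
          ≤ (∑ p : Ω × Ω, pathC P K z r p * Φ p.1 p.2)
            + ∑ p : Ω × Ω, K (z r) (z (r + 1)) p * Φ p.1 p.2 := step
        _ ≤ β * (∑ l ∈ Finset.range r, Φ (z l) (z (l + 1))) + β * Φ (z r) (z (r + 1)) :=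
            add_le_add h1 h2
        _ = β * ∑ l ∈ Finset.range (r + 1), Φ (z l) (z (l + 1)) := by
            rw [Finset.sum_range_succ, mul_add]

/-- Total variation is bounded by the off-diagonal mass of any coupling. -/
lemma tv_le_offdiag (w : Ω × Ω → ℝ) (μ ν : Ω → ℝ) (hw : ∀ p, 0 ≤ w p)
    (h1 : ∀ a, ∑ b, w (a, b) = μ a) (h2 : ∀ b, ∑ a, w (a, b) = ν b) :
    tvDist μ ν ≤ ∑ p : Ω × Ω, if p.1 = p.2 then 0 else w p := by
  set f : Ω → ℝ := fun s => ∑ b, if s = b then 0 else w (s, b) with hf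
  set g : Ω → ℝ := fun s => ∑ a, if a = s then 0 else w (a, s) with hg
  have hμ : ∀ s, μ s = w (s, s) + f s := by
    intro s
    rw [← h1 s, hf]
    have : ∀ b : Ω, w (s, b) = (if s = b then w (s, b) else 0) + (if s = b then 0 else w (s, b)) := by
      intro b; split <;> simp
    rw [Finset.sum_congr rfl fun b _ => this b, Finset.sum_add_distrib]
    simp
  have hν : ∀ s, ν s = w (s, s) + g s := by
    intro s
    rw [← h2 s, hg]
    have : ∀ a : Ω, w (a, s) = (if a = s then w (a, s) else 0) + (if a = s then 0 else w (a, s)) := by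
      intro a; split <;> simp
    rw [Finset.sum_congr rfl fun a _ => this a, Finset.sum_add_distrib]
    simp
  have hfg : ∀ s, |μ s - ν s| ≤ f s + g s := by
    intro s
    have hf0 : 0 ≤ f s := Finset.sum_nonneg fun b _ => by split <;> simp [hw]
    have hg0 : 0 ≤ g s := Finset.sum_nonneg fun a _ => by split <;> simp [hw]
    have e : μ s - ν s = f s - g s := by rw [hμ s, hν s]; ring
    rw [e, abs_le]
    constructor <;> linarith
  have hsumf : ∑ s, f s = ∑ p : Ω × Ω, if p.1 = p.2 then 0 else w p := by
    rw [Fintype.sum_prod_type, hf]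
  have hsumg : ∑ s, g s = ∑ p : Ω × Ω, if p.1 = p.2 then 0 else w p := by
    rw [Fintype.sum_prod_type, hg, Finset.sum_comm]
  have : ∑ s, |μ s - ν s| ≤ (∑ p : Ω × Ω, if p.1 = p.2 then 0 else w p) * 2 := by
    calc ∑ s, |μ s - ν s| ≤ ∑ s, (f s + g s) := Finset.sum_le_sum fun s _ => hfg s
      _ = (∑ s, f s) + ∑ s, g s := Finset.sum_add_distrib
      _ = (∑ p : Ω × Ω, if p.1 = p.2 then 0 else w p) * 2 := by rw [hsumf, hsumg]; ring
  rw [tvDist]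
  linarith

/-- Total variation between two probability distributions is at most `1`. -/
lemma tv_le_one' (μ ν : Ω → ℝ) (hμ0 : ∀ s, 0 ≤ μ s) (hν0 : ∀ s, 0 ≤ ν s)
    (hμ1 : ∑ s, μ s = 1) (hν1 : ∑ s, ν s = 1) : tvDist μ ν ≤ 1 := by
  have : ∑ s, |μ s - ν s| ≤ ∑ s, (μ s + ν s) :=
    Finset.sum_le_sum fun s _ => (abs_sub (μ s) (ν s)).trans (by
      rw [abs_of_nonneg (hμ0 s), abs_of_nonneg (hν0 s)])
  rw [tvDist]
  have h2 : ∑ s, (μ s + ν s) = 2 := by rw [Finset.sum_add_distrib, hμ1, hν1]; norm_num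
  nlinarith [this]



lemma chainDist_nonneg' {P : Ω → Ω → ℝ} (hP0 : ∀ x y, 0 ≤ P x y) (x : Ω) :
    ∀ t s, 0 ≤ chainDist P x t s := by
  intro t
  induction t with
  | zero => intro s; simp only [chainDist]; split <;> norm_num
  | succ t ih => intro s; exact Finset.sum_nonneg fun s' _ => mul_nonneg (ih s') (hP0 s' s)

lemma chainDist_sum_one' {P : Ω → Ω → ℝ} (hP1 : ∀ x, ∑ y, P x y = 1) (x : Ω) :
    ∀ t, ∑ s, chainDist P x t s = 1 := by
  intro t
  induction t with
  | zero => simp [chainDist]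
  | succ t ih =>
      show ∑ s, ∑ s', chainDist P x t s' * P s' s = 1
      rw [Finset.sum_comm]
      calc ∑ s', ∑ s, chainDist P x t s' * P s' s
          = ∑ s', chainDist P x t s' * ∑ s, P s' s :=
            Finset.sum_congr rfl fun s' _ => (Finset.mul_sum _ _ _).symm
        _ = 1 := by simp only [hP1, mul_one]; exact ih

end PathCouplingAux

/-- path coupling, Theorem 4 of the paper: if every pair of
states is joined by a path of pairs in `S` along which `Φ` is additive, and a
coupling `K` of the chain contracts `Φ` by a factor `β < 1` on every pair in `S`,
then `‖μ_t - π‖_var ≤ min{1, β^t D}` and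
`T_mix ≤ ⌈log(De)/log(β⁻¹)⌉ ≤ ⌈log(De)/(1-β)⌉`. -/
theorem path_coupling_mixing_time
    {Ω : Type*} [Fintype Ω] [DecidableEq Ω] [Nonempty Ω]
    (P : Ω → Ω → ℝ)
    (hP0 : ∀ x y, 0 ≤ P x y) (hP1 : ∀ x, ∑ y, P x y = 1)
    (hirr : ChainIrreducible P) (haper : ChainAperiodic P)
    (π : Ω → ℝ) (hπ0 : ∀ x, 0 ≤ π x) (hπ1 : ∑ x, π x = 1)
    (hπstat : ∀ y, ∑ x, π x * P x y = π y)
    (Φ : Ω → Ω → ℝ)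
    (hΦ0 : ∀ x y, 0 ≤ Φ x y) (hΦeq : ∀ x y, Φ x y = 0 ↔ x = y)
    (hΦsymm : ∀ x y, Φ x y = Φ y x)
    (hΦtri : ∀ x y z, Φ x z ≤ Φ x y + Φ y z)
    (Dmin Dmax D : ℝ)
    (hDminle : ∀ x y : Ω, x ≠ y → Dmin ≤ Φ x y)
    (hDminmem : ∃ x y : Ω, x ≠ y ∧ Φ x y = Dmin)
    (hDmaxle : ∀ x y : Ω, Φ x y ≤ Dmax)
    (hDmaxmem : ∃ x y : Ω, Φ x y = Dmax)
    (hD : D = Dmax / Dmin)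
    -- the set of pairs on which the contraction condition is assumed
    (S : Set (Ω × Ω))
    -- every pair of states is joined by a path of pairs in `S` on which `Φ` is additive
    (hpath : ∀ x y : Ω, ∃ (r : ℕ) (z : ℕ → Ω), z 0 = x ∧ z r = y ∧
      (∀ l < r, (z l, z (l + 1)) ∈ S) ∧
      Φ x y = ∑ l ∈ Finset.range r, Φ (z l) (z (l + 1)))
    -- `K x y` is the joint law of one coupled step of the chain from `(x,y)`
    (K : Ω → Ω → Ω × Ω → ℝ)
    (hK0 : ∀ x y p, 0 ≤ K x y p)
    (hKmarg1 : ∀ x y x', ∑ y' : Ω, K x y (x', y') = P x x')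
    (hKmarg2 : ∀ x y y', ∑ x' : Ω, K x y (x', y') = P y y')
    (hKdiag : ∀ x : Ω, ∀ p : Ω × Ω, p.1 ≠ p.2 → K x x p = 0)
    (β : ℝ) (hβ0 : 0 < β) (hβ1 : β < 1)
    (hcontr : ∀ p ∈ S, ∑ p' : Ω × Ω, K p.1 p.2 p' * Φ p'.1 p'.2 ≤ β * Φ p.1 p.2) :
    (∀ x : Ω, ∀ t : ℕ, tvDist (chainDist P x t) π ≤ min 1 (β ^ t * D)) ∧
    mixTime P π Finset.univ ≤ ⌈Real.log (D * Real.exp 1) / Real.log β⁻¹⌉₊ ∧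
    ⌈Real.log (D * Real.exp 1) / Real.log β⁻¹⌉₊ ≤
      ⌈Real.log (D * Real.exp 1) / (1 - β)⌉₊ := by
  -- basic facts about the metric constants
  obtain ⟨x0, y0, hxy0, hmin⟩ := hDminmem
  have hDminpos : 0 < Dmin := by
    rcases lt_or_eq_of_le (hΦ0 x0 y0) with h | h
    · rw [← hmin]; exact h
    · exact absurd ((hΦeq x0 y0).mp h.symm) hxy0
  have hDmm : Dmin ≤ Dmax := by rw [← hmin]; exact hDmaxle x0 y0
  have hD1 : 1 ≤ D := by rw [hD]; exact (one_le_div hDminpos).mpr hDmm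
  have hDpos : 0 < D := lt_of_lt_of_le one_pos hD1
  have hΦdiag : ∀ a : Ω, Φ a a = 0 := fun a => (hΦeq a a).mpr rfl
  -- choose paths and build a one-step coupling `Q` of every pair
  choose r z hz0 hzr hzS hzsum using hpath
  set Q : Ω → Ω → Ω × Ω → ℝ := fun x y => pathC P K (z x y) (r x y) with hQ
  have hQ0 : ∀ x y p, 0 ≤ Q x y p := fun x y p => pathC_nonneg hP0 hK0 _ p
  have hQm1 : ∀ x y a, ∑ b, Q x y (a, b) = P x a := by
    intro x y a
    have := (pathC_marg (z := z x y) hP0 hK0 hKmarg1 hKmarg2 (r x y)).1 a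
    simp only [hQ]
    rw [this, hz0]
  have hQm2 : ∀ x y b, ∑ a, Q x y (a, b) = P y b := by
    intro x y b
    have := (pathC_marg (z := z x y) hP0 hK0 hKmarg1 hKmarg2 (r x y)).2 b
    simp only [hQ]
    rw [this, hzr]
  have hQE : ∀ x y, ∑ p : Ω × Ω, Q x y p * Φ p.1 p.2 ≤ β * Φ x y := by
    intro x y
    have h := pathC_expect (z := z x y) hP0 hK0 hKmarg1 hKmarg2 Φ hΦdiag hΦtri β (r x y)
      (fun l hl => hcontr (z x y l, z x y (l + 1)) (hzS x y l hl))
    simp only [hQ]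
    rw [hzsum x y]
    exact h
  -- the coupled evolution and the key variation bound
  have key : ∀ (x : Ω) (t : ℕ), tvDist (chainDist P x t) π ≤ β ^ t * D := by
    intro x t
    set ν : ℕ → Ω × Ω → ℝ := fun n => Nat.rec (fun p => (if p.1 = x then 1 else 0) * π p.2)
      (fun _ ih p => ∑ q : Ω × Ω, ih q * Q q.1 q.2 p) n with hν
    have hνpos : ∀ n p, 0 ≤ ν n p := by
      intro n
      induction n with
      | zero =>
          intro p
          show (0:ℝ) ≤ (if p.1 = x then 1 else 0) * π p.2
          exact mul_nonneg (by split <;> norm_num) (hπ0 p.2)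
      | succ n ih =>
          intro p
          show (0:ℝ) ≤ ∑ q : Ω × Ω, ν n q * Q q.1 q.2 p
          exact Finset.sum_nonneg fun q _ => mul_nonneg (ih q) (hQ0 _ _ p)
    have hνm1 : ∀ n a, ∑ b, ν n (a, b) = chainDist P x n a := by
      intro n
      induction n with
      | zero =>
          intro a
          show ∑ b, (if a = x then 1 else 0) * π b = chainDist P x 0 a
          rw [← Finset.mul_sum, hπ1, mul_one]
          simp [chainDist]
      | succ n ih =>
          intro a
          show ∑ b, ∑ q : Ω × Ω, ν n q * Q q.1 q.2 (a, b) = chainDist P x (n+1) a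
          rw [Finset.sum_comm]
          calc ∑ q : Ω × Ω, ∑ b, ν n q * Q q.1 q.2 (a, b)
              = ∑ q : Ω × Ω, ν n q * P q.1 a := by
                refine Finset.sum_congr rfl fun q _ => ?_
                rw [← Finset.mul_sum, hQm1]
            _ = ∑ q1, ∑ q2, ν n (q1, q2) * P q1 a := by rw [Fintype.sum_prod_type]
            _ = ∑ q1, (∑ q2, ν n (q1, q2)) * P q1 a :=
                Finset.sum_congr rfl fun q1 _ => (Finset.sum_mul _ _ _).symm
            _ = ∑ q1, chainDist P x n q1 * P q1 a :=
                Finset.sum_congr rfl fun q1 _ => by rw [ih q1]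
            _ = chainDist P x (n+1) a := rfl
    have hνm2 : ∀ n b, ∑ a, ν n (a, b) = π b := by
      intro n
      induction n with
      | zero =>
          intro b
          show ∑ a, (if a = x then 1 else 0) * π b = π b
          rw [← Finset.sum_mul]
          simp
      | succ n ih =>
          intro b
          show ∑ a, ∑ q : Ω × Ω, ν n q * Q q.1 q.2 (a, b) = π b
          rw [Finset.sum_comm]
          calc ∑ q : Ω × Ω, ∑ a, ν n q * Q q.1 q.2 (a, b)
              = ∑ q : Ω × Ω, ν n q * P q.2 b := by
                refine Finset.sum_congr rfl fun q _ => ?_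
                rw [← Finset.mul_sum, hQm2]
            _ = ∑ q1, ∑ q2, ν n (q1, q2) * P q2 b := by rw [Fintype.sum_prod_type]
            _ = ∑ q2, ∑ q1, ν n (q1, q2) * P q2 b := Finset.sum_comm
            _ = ∑ q2, (∑ q1, ν n (q1, q2)) * P q2 b :=
                Finset.sum_congr rfl fun q2 _ => (Finset.sum_mul _ _ _).symm
            _ = ∑ q2, π q2 * P q2 b := Finset.sum_congr rfl fun q2 _ => by rw [ih q2]
            _ = π b := hπstat b
    have hW : ∀ n, ∑ p : Ω × Ω, ν n p * Φ p.1 p.2 ≤ β ^ n * Dmax := by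
      intro n
      induction n with
      | zero =>
          have hsum : ∑ p : Ω × Ω, ν 0 p = 1 := by
            rw [Fintype.sum_prod_type]
            calc ∑ a, ∑ b, ν 0 (a, b) = ∑ a, chainDist P x 0 a :=
                  Finset.sum_congr rfl fun a _ => hνm1 0 a
              _ = 1 := chainDist_sum_one' hP1 x 0
          calc ∑ p : Ω × Ω, ν 0 p * Φ p.1 p.2
              ≤ ∑ p : Ω × Ω, ν 0 p * Dmax := Finset.sum_le_sum fun p _ =>
                mul_le_mul_of_nonneg_left (hDmaxle p.1 p.2) (hνpos 0 p)
            _ = Dmax := by rw [← Finset.sum_mul, hsum, one_mul]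
            _ = β ^ 0 * Dmax := by rw [pow_zero, one_mul]
      | succ n ih =>
          calc ∑ p : Ω × Ω, ν (n+1) p * Φ p.1 p.2
              = ∑ p : Ω × Ω, (∑ q : Ω × Ω, ν n q * Q q.1 q.2 p) * Φ p.1 p.2 := rfl
            _ = ∑ p : Ω × Ω, ∑ q : Ω × Ω, ν n q * Q q.1 q.2 p * Φ p.1 p.2 :=
                Finset.sum_congr rfl fun p _ => Finset.sum_mul _ _ _
            _ = ∑ q : Ω × Ω, ∑ p : Ω × Ω, ν n q * Q q.1 q.2 p * Φ p.1 p.2 := Finset.sum_comm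
            _ = ∑ q : Ω × Ω, ν n q * ∑ p : Ω × Ω, Q q.1 q.2 p * Φ p.1 p.2 := by
                refine Finset.sum_congr rfl fun q _ => ?_
                rw [Finset.mul_sum]
                exact Finset.sum_congr rfl fun p _ => (mul_assoc _ _ _)
            _ ≤ ∑ q : Ω × Ω, ν n q * (β * Φ q.1 q.2) := Finset.sum_le_sum fun q _ =>
                mul_le_mul_of_nonneg_left (hQE q.1 q.2) (hνpos n q)
            _ = β * ∑ q : Ω × Ω, ν n q * Φ q.1 q.2 := by
                rw [Finset.mul_sum]
                exact Finset.sum_congr rfl fun q _ => by ring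
            _ ≤ β * (β ^ n * Dmax) := mul_le_mul_of_nonneg_left ih (le_of_lt hβ0)
            _ = β ^ (n+1) * Dmax := by ring
    have hoff : tvDist (chainDist P x t) π ≤ ∑ p : Ω × Ω, if p.1 = p.2 then 0 else ν t p :=
      tv_le_offdiag (ν t) _ _ (hνpos t) (hνm1 t) (hνm2 t)
    have hoff2 : Dmin * (∑ p : Ω × Ω, if p.1 = p.2 then 0 else ν t p) ≤ β ^ t * Dmax := by
      rw [Finset.mul_sum]
      refine le_trans (Finset.sum_le_sum (fun p _ => ?_)) (hW t)
      by_cases h : p.1 = p.2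
      · rw [if_pos h, mul_zero]
        exact mul_nonneg (hνpos t p) (hΦ0 p.1 p.2)
      · rw [if_neg h, mul_comm]
        exact mul_le_mul_of_nonneg_left (hDminle p.1 p.2 h) (hνpos t p)
    calc tvDist (chainDist P x t) π
        ≤ ∑ p : Ω × Ω, if p.1 = p.2 then 0 else ν t p := hoff
      _ ≤ (β ^ t * Dmax) / Dmin := by
          rw [le_div_iff₀ hDminpos, mul_comm]
          exact hoff2
      _ = β ^ t * D := by rw [hD, mul_div_assoc]
  -- the numeric endgame
  have hβinv : 1 < β⁻¹ := by
    have h := mul_inv_cancel₀ (ne_of_gt hβ0)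
    nlinarith [inv_pos.mpr hβ0]
  have hlogβ : 0 < Real.log β⁻¹ := Real.log_pos hβinv
  have hlogD : 0 ≤ Real.log D := Real.log_nonneg hD1
  have hL : Real.log (D * Real.exp 1) = Real.log D + 1 := by
    rw [Real.log_mul (ne_of_gt hDpos) (Real.exp_pos 1).ne', Real.log_exp]
  have hTge : Real.log (D * Real.exp 1) / Real.log β⁻¹
      ≤ (⌈Real.log (D * Real.exp 1) / Real.log β⁻¹⌉₊ : ℝ) := Nat.le_ceil _
  set T : ℕ := ⌈Real.log (D * Real.exp 1) / Real.log β⁻¹⌉₊ with hTdef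
  have hTmul : Real.log D + 1 ≤ (T : ℝ) * Real.log β⁻¹ := by
    rw [← hL]
    exact (div_le_iff₀ hlogβ).mp hTge
  have hβT : β ^ T * D ≤ 1 / Real.exp 1 := by
    have hβTe : β ^ T = Real.exp ((T : ℝ) * Real.log β) := by
      conv_lhs => rw [← Real.exp_log hβ0]
      rw [← Real.exp_nat_mul]
    have hneg : (T : ℝ) * Real.log β ≤ -(Real.log D + 1) := by
      have hi : Real.log β⁻¹ = -Real.log β := Real.log_inv β
      rw [hi] at hTmul
      nlinarith
    have h1 : β ^ T ≤ Real.exp (-(Real.log D + 1)) := by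
      rw [hβTe]
      exact Real.exp_le_exp.mpr hneg
    have hED : Real.exp (-(Real.log D + 1)) = 1 / (D * Real.exp 1) := by
      rw [Real.exp_neg, Real.exp_add, Real.exp_log hDpos, one_div]
    rw [hED] at h1
    calc β ^ T * D ≤ (1 / (D * Real.exp 1)) * D :=
          mul_le_mul_of_nonneg_right h1 hDpos.le
      _ = 1 / Real.exp 1 := by
          field_simp
  refine ⟨fun x t => le_min (tv_le_one' _ _ (chainDist_nonneg' hP0 x t) hπ0
      (chainDist_sum_one' hP1 x t) hπ1) (key x t), ?_, ?_⟩
  · refine Finset.sup_le fun x _ => Nat.sInf_le ?_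
    show tvDist (chainDist P x T) π ≤ 1 / Real.exp 1
    exact le_trans (key x T) hβT
  · have h1β : 0 < 1 - β := by linarith
    have hlb : 1 - β ≤ Real.log β⁻¹ := by
      have h := Real.log_le_sub_one_of_pos hβ0
      rw [Real.log_inv]
      linarith
    have hDe : 0 ≤ Real.log (D * Real.exp 1) := by rw [hL]; linarith
    exact Nat.ceil_le_ceil (div_le_div_of_nonneg_left hDe h1β hlb)
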